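/- Let C ⊆ ℝⁿ be a full-dimensional convex set with facial dimension signature I, and let Bⁿ be the closed unit Euclidean ball. Then the facial dimension signature of Bⁿ ∩ C is a subset of I ∪ {0}. -/

import Mathlib

open Set Metric RealInnerProductSpace

variable {E : Type*} [NormedAddCommGroup E] [NormedSpace ℝ E]

/-- A face of a convex set: a convex subset `F` of `C` such that any open segment of `C`
meeting `F` has both endpoints in `F`. -/
def IsFace (C F : Set E) : Prop := Convex ℝ F ∧ IsExtreme ℝ C F

/-- Dimension of a convex set: the dimension of its affine hull. -/
noncomputable def sdim (S : Set E) : ℕ := Module.finrank ℝ (affineSpan ℝ S).direction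

/-- The facial dimension signature: the set of dimensions of nonempty faces. -/
def faceDimSig (C : Set E) : Set ℕ :=
  {d | ∃ F : Set E, IsFace C F ∧ F.Nonempty ∧ sdim F = d}

/-- The minimal face of `C` containing `x`. -/
def minFace (C : Set E) (x : E) : Set E := ⋂₀ {F | IsFace C F ∧ x ∈ F}

/-! ### Auxiliary lemmas -/

lemma aux_ext_lemma {F : Set E} {m y : E}
    (hm : m ∈ intrinsicInterior ℝ F) (hy : y ∈ F) :
    ∃ z ∈ F, m ∈ openSegment ℝ y z := by
  obtain ⟨m', hm', rfl⟩ := hm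
  have hyA : y ∈ affineSpan ℝ F := subset_affineSpan ℝ F hy
  have hc : ∀ t : ℝ, t • ((m' : E) - y) + (m' : E) ∈ affineSpan ℝ F := by
    intro t
    have := (affineSpan ℝ F).smul_vsub_vadd_mem t m'.2 hyA m'.2
    simpa [vsub_eq_sub, vadd_eq_add] using this
  let f : ℝ → affineSpan ℝ F := fun t => ⟨_, hc t⟩
  have hf : Continuous f := by
    apply Continuous.subtype_mk
    continuity
  have h0 : f 0 = m' := by
    apply Subtype.ext
    simp [f]
  have hev : ∀ᶠ t in nhds (0:ℝ), f t ∈ interior ((↑) ⁻¹' F : Set (affineSpan ℝ F)) :=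
    hf.continuousAt.eventually_mem (isOpen_interior.mem_nhds (h0 ▸ hm'))
  obtain ⟨ε, hε, hball⟩ := Metric.eventually_nhds_iff.mp hev
  have ht : 0 < ε/2 := by positivity
  have htm : f (ε/2) ∈ interior ((↑) ⁻¹' F : Set (affineSpan ℝ F)) := by
    apply hball
    rw [Real.dist_eq, sub_zero, abs_of_pos ht]
    linarith
  have hzF' : f (ε/2) ∈ ((↑) ⁻¹' F : Set (affineSpan ℝ F)) := interior_subset htm
  have hzF : ((f (ε/2) : E)) ∈ F := hzF'
  set t := ε/2
  refine ⟨_, hzF, ⟨t/(1+t), 1/(1+t), by positivity, by positivity, by field_simp; ring, ?_⟩⟩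
  show (t/(1+t)) • y + (1/(1+t)) • (t • ((m' : E) - y) + (m' : E)) = (m' : E)
  have h1t : (0:ℝ) < 1 + t := by positivity
  match_scalars <;> (field_simp; try ring)

lemma aux_seg_lemma {F : Set E} (hF : Convex ℝ F) {r p : E}
    (hr : r ∈ intrinsicInterior ℝ F) (hp : p ∈ F) {t : ℝ} (ht0 : 0 ≤ t) (ht1 : t < 1) :
    (1-t) • r + t • p ∈ intrinsicInterior ℝ F := by
  obtain ⟨r', hr', rfl⟩ := hr
  have hpA : p ∈ affineSpan ℝ F := subset_affineSpan ℝ F hp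
  have h1t : (0:ℝ) < 1 - t := by linarith
  have hqA : (1-t) • ((r' : E)) + t • p ∈ affineSpan ℝ F := by
    have := (affineSpan ℝ F).smul_vsub_vadd_mem (1-t) r'.2 hpA hpA
    simp only [vsub_eq_sub, vadd_eq_add] at this
    convert this using 1
    module
  have hgmem : ∀ x : affineSpan ℝ F, (1-t)⁻¹ • ((x : E) - p) + p ∈ affineSpan ℝ F := by
    intro x
    have := (affineSpan ℝ F).smul_vsub_vadd_mem (1-t)⁻¹ x.2 hpA hpA
    simpa [vsub_eq_sub, vadd_eq_add] using this
  let g : affineSpan ℝ F → affineSpan ℝ F := fun x => ⟨_, hgmem x⟩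
  have hg : Continuous g := by
    exact Continuous.subtype_mk
      (((continuous_subtype_val.sub continuous_const).const_smul _).add continuous_const) _
  refine ⟨⟨_, hqA⟩, ?_, rfl⟩
  rw [mem_interior]
  refine ⟨g ⁻¹' (interior ((↑) ⁻¹' F : Set (affineSpan ℝ F))), ?_,
    hg.isOpen_preimage _ isOpen_interior, ?_⟩
  · intro x hx
    have hx' : (((g x : affineSpan ℝ F) : E)) ∈ F :=
      (interior_subset hx : g x ∈ ((↑) ⁻¹' F : Set (affineSpan ℝ F)))
    have hxe : (x : E) = (1-t) • ((g x : affineSpan ℝ F) : E) + t • p := by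
      show (x : E) = (1-t) • ((1-t)⁻¹ • ((x : E) - p) + p) + t • p
      rw [smul_add, smul_smul, mul_inv_cancel₀ h1t.ne']
      module
    show (x : E) ∈ F
    rw [hxe]
    exact hF hx' hp (by linarith) ht0 (by ring)
  · show g ⟨_, hqA⟩ ∈ interior ((↑) ⁻¹' F : Set (affineSpan ℝ F))
    have hge : g ⟨_, hqA⟩ = r' := by
      apply Subtype.ext
      show (1-t)⁻¹ • (((1-t) • ((r' : E)) + t • p) - p) + p = (r' : E)
      rw [show ((1-t) • ((r' : E)) + t • p) - p = (1-t) • ((r' : E) - p) by module,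
        smul_smul, inv_mul_cancel₀ h1t.ne']
      module
    rw [hge]; exact hr'

lemma aux_span_inter_open {s U : Set E} (hs : Convex ℝ s) (hU : IsOpen U) {m : E}
    (hms : m ∈ s) (hmU : m ∈ U) :
    affineSpan ℝ (s ∩ U) = affineSpan ℝ s := by
  refine le_antisymm (affineSpan_mono ℝ inter_subset_left) ?_
  rw [affineSpan_le]
  intro y hy
  have hcont : ContinuousAt (fun t : ℝ => (1-t) • m + t • y) 0 := by fun_prop
  have h0 : ((1:ℝ)-0) • m + (0:ℝ) • y = m := by simp
  have hev : ∀ᶠ t in nhds (0:ℝ), (1-t) • m + t • y ∈ U := by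
    apply hcont.eventually_mem
    rw [h0]
    exact hU.mem_nhds hmU
  obtain ⟨ε, hε, hball⟩ := Metric.eventually_nhds_iff.mp hev
  set t := min (ε/2) 1 with htdef
  have ht0 : 0 < t := by positivity
  have ht1 : t ≤ 1 := min_le_right _ _
  have hwU : (1-t) • m + t • y ∈ U := by
    apply hball
    rw [Real.dist_eq, sub_zero, abs_of_pos ht0]
    calc t ≤ ε/2 := min_le_left _ _
      _ < ε := by linarith
  have hws : (1-t) • m + t • y ∈ s := hs hms hy (by linarith) ht0.le (by ring)
  have hy' : y = t⁻¹ • (((1-t) • m + t • y) - m) + m := by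
    rw [show ((1-t) • m + t • y) - m = t • (y - m) by module, smul_smul,
      inv_mul_cancel₀ ht0.ne']
    module
  rw [hy']
  have hmem : (1-t) • m + t • y ∈ affineSpan ℝ (s ∩ U) := subset_affineSpan ℝ _ ⟨hws, hwU⟩
  have hmmem : m ∈ affineSpan ℝ (s ∩ U) := subset_affineSpan ℝ _ ⟨hms, hmU⟩
  have := (affineSpan ℝ (s ∩ U)).smul_vsub_vadd_mem t⁻¹ hmem hmmem hmmem
  simpa [vsub_eq_sub, vadd_eq_add] using this

lemma aux_sdim_mono [FiniteDimensional ℝ E] {s t : Set E} (h : s ⊆ t) : sdim s ≤ sdim t :=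
  Submodule.finrank_mono (AffineSubspace.direction_le (affineSpan_mono ℝ h))

set_option maxHeartbeats 1000000 in
theorem faceDimSig_ball_inter {n : ℕ} (C : Set (EuclideanSpace ℝ (Fin n)))
    (hC : Convex ℝ C) (hfull : sdim C = n) :
    faceDimSig (closedBall (0 : EuclideanSpace ℝ (Fin n)) 1 ∩ C) ⊆ faceDimSig C ∪ {0} := by
  rintro d ⟨F, ⟨hFconv, hFext⟩, hFne, rfl⟩
  by_cases hd : sdim F = 0
  · exact Or.inr hd
  left
  have hFK : F ⊆ closedBall (0 : EuclideanSpace ℝ (Fin n)) 1 ∩ C := hFext.1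
  -- F has two distinct points
  have h2 : ∃ p ∈ F, ∃ q ∈ F, p ≠ q := by
    by_contra h
    push_neg at h
    obtain ⟨p, hp⟩ := hFne
    have hFp : F = {p} := by
      ext x
      exact ⟨fun hx => h x hx p hp, fun hx => by rw [mem_singleton_iff] at hx; rwa [hx]⟩
    apply hd
    rw [sdim, direction_affineSpan, hFp, vectorSpan_singleton]
    exact finrank_bot ℝ _
  obtain ⟨p, hp, q, hq, hpq⟩ := h2
  -- a point of F of norm < 1
  have hnorm : ∀ x ∈ F, ‖x‖ ≤ 1 := fun x hx => mem_closedBall_zero_iff.mp (hFK hx).1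
  have hm0 : ∃ m0 ∈ F, ‖m0‖ < 1 := by
    by_cases hp1 : ‖p‖ < 1
    · exact ⟨p, hp, hp1⟩
    by_cases hq1 : ‖q‖ < 1
    · exact ⟨q, hq, hq1⟩
    have hp1' : ‖p‖ = 1 := le_antisymm (hnorm p hp) (not_lt.mp hp1)
    have hq1' : ‖q‖ = 1 := le_antisymm (hnorm q hq) (not_lt.mp hq1)
    refine ⟨(1/2 : ℝ) • p + (1/2 : ℝ) • q,
      hFconv hp hq (by norm_num) (by norm_num) (by norm_num), ?_⟩
    have hray : ¬ SameRay ℝ p q := by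
      intro hray
      have := hray.norm_smul_eq
      rw [hp1', hq1', one_smul, one_smul] at this
      exact hpq this.symm
    have hlt : ‖p + q‖ < 2 := by
      have := norm_add_lt_of_not_sameRay hray
      rw [hp1', hq1'] at this
      linarith
    have : (1/2 : ℝ) • p + (1/2 : ℝ) • q = (1/2 : ℝ) • (p + q) := by module
    rw [this, norm_smul, Real.norm_eq_abs, abs_of_pos (by norm_num : (0:ℝ) < 1/2)]
    linarith
  obtain ⟨m0, hm0F, hm0n⟩ := hm0
  -- relative interior point of norm < 1
  obtain ⟨r, hrI⟩ := hFne.intrinsicInterior hFconv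
  have hrF : r ∈ F := intrinsicInterior_subset hrI
  set m := (1 - (1/2 : ℝ)) • r + (1/2 : ℝ) • m0 with hmdef
  have hmI : m ∈ intrinsicInterior ℝ F :=
    aux_seg_lemma hFconv hrI hm0F (by norm_num) (by norm_num)
  have hmF : m ∈ F := intrinsicInterior_subset hmI
  have hmC : m ∈ C := (hFK hmF).2
  have hmB : ‖m‖ < 1 := by
    calc ‖m‖ ≤ ‖(1 - (1/2 : ℝ)) • r‖ + ‖(1/2 : ℝ) • m0‖ := norm_add_le _ _
      _ = (1/2) * ‖r‖ + (1/2) * ‖m0‖ := by rw [norm_smul, norm_smul]; norm_num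
      _ < 1 := by have := hnorm r hrF; linarith
  -- the face of C generated by m
  set G : Set (EuclideanSpace ℝ (Fin n)) :=
    {y | y ∈ C ∧ ∃ z ∈ C, m ∈ openSegment ℝ y z} with hGdef
  have hmG : m ∈ G := ⟨hmC, m, hmC, by rw [openSegment_same]; exact rfl⟩
  have hGC : G ⊆ C := fun y hy => hy.1
  -- key step for extremality
  have hstep : ∀ x1 x2 : EuclideanSpace ℝ (Fin n), x1 ∈ C → x2 ∈ C →
      (∀ x ∈ G, x ∈ openSegment ℝ x1 x2 → x1 ∈ G) := by
    intro x1 x2 hx1 hx2 x hxG hxseg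
    obtain ⟨hxC, u, huC, a, b, ha, hb, hab, hm⟩ := hxG
    obtain ⟨c, e, hc, he, hce, hx⟩ := hxseg
    have hac1 : a * c < 1 := by nlinarith
    have hden : (0:ℝ) < 1 - a * c := by linarith
    have hwC : ((a*e)/(1-a*c)) • x2 + (b/(1-a*c)) • u ∈ C := hC hx2 huC (by positivity)
      (by positivity)
      (by rw [← add_div, div_eq_one_iff_eq hden.ne']; linear_combination hab + a*hce)
    refine ⟨hx1, _, hwC, a*c, 1-a*c, by positivity, hden, by ring, ?_⟩
    have key : (a*c) • x1 + (1-a*c) • (((a*e)/(1-a*c)) • x2 + (b/(1-a*c)) • u)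
        = a • x + b • u := by
      rw [← hx]
      match_scalars <;> field_simp <;> ring
    rw [key, hm]
  have hGext : IsExtreme ℝ C G := by
    refine ⟨hGC, fun x1 hx1 x2 hx2 x hxG hxseg => ?_⟩
    exact hstep x1 x2 hx1 hx2 x hxG hxseg
  -- convexity of G
  have hGconv : Convex ℝ G := by
    intro y1 hy1 y2 hy2 a b ha hb hab
    rcases eq_or_lt_of_le ha with ha0 | ha0
    · have hb1 : b = 1 := by linarith
      simp only [← ha0, hb1, zero_smul, one_smul, zero_add]
      exact hy2
    rcases eq_or_lt_of_le hb with hb0 | hb0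
    · have ha1 : a = 1 := by linarith
      simp only [← hb0, ha1, zero_smul, one_smul, add_zero]
      exact hy1
    obtain ⟨hy1C, z1, hz1C, t1, s1, ht1, hs1, hts1, he1⟩ := hy1
    obtain ⟨hy2C, z2, hz2C, t2, s2, ht2, hs2, hts2, he2⟩ := hy2
    have hD : 0 < a*t2 + b*t1 := by positivity
    have hsum : a*t2*s1 + b*t1*s2 = a*t2 + b*t1 - t1*t2 := by
      have h1 : s1 = 1 - t1 := by linarith
      have h2 : s2 = 1 - t2 := by linarith
      rw [h1, h2]
      linear_combination (-(t1*t2))*hab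
    have hD' : 0 < a*t2 + b*t1 - t1*t2 := by
      rw [← hsum]; positivity
    refine ⟨hC hy1C hy2C ha hb hab,
      (a*t2*s1/(a*t2+b*t1-t1*t2)) • z1 + (b*t1*s2/(a*t2+b*t1-t1*t2)) • z2,
      hC hz1C hz2C (by positivity) (by positivity)
        (by rw [← add_div, div_eq_one_iff_eq hD'.ne']; linarith [hsum]),
      t1*t2/(a*t2+b*t1), (a*t2+b*t1-t1*t2)/(a*t2+b*t1), by positivity, by positivity,
      by rw [← add_div, div_eq_one_iff_eq hD.ne']; ring, ?_⟩
    have key : (t1*t2/(a*t2+b*t1)) • (a • y1 + b • y2)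
        + ((a*t2+b*t1-t1*t2)/(a*t2+b*t1)) • ((a*t2*s1/(a*t2+b*t1-t1*t2)) • z1
          + (b*t1*s2/(a*t2+b*t1-t1*t2)) • z2)
        = (a*t2/(a*t2+b*t1)) • (t1 • y1 + s1 • z1) + (b*t1/(a*t2+b*t1)) • (t2 • y2 + s2 • z2) := by
      match_scalars <;> field_simp [show a*t2+b*t1-t2*t1 ≠ 0 by rw [mul_comm t2 t1]; exact hD'.ne'] <;> ring
    rw [key, he1, he2, ← add_smul, ← add_div]
    rw [show a*t2 + b*t1 = a*t2+b*t1 by ring, div_self hD.ne', one_smul]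
  -- G ∩ B ⊆ F
  have hGBF : G ∩ closedBall (0 : EuclideanSpace ℝ (Fin n)) 1 ⊆ F := by
    rintro y ⟨⟨hyC, u, huC, a, b, ha, hb, hab, hm⟩, hyB⟩
    by_cases hum : u = m
    · -- then y = m
      rw [hum] at hm
      have h1 : a • y = a • m := by
        rw [eq_sub_of_add_eq hm, show m - b • m = (1-b) • m by module,
          show (1:ℝ)-b = a by linarith]
      have hym : y = m := smul_right_injective _ ha.ne' h1
      rw [hym]; exact hmF
    · have humn : 0 < ‖u - m‖ := by
        rw [norm_pos_iff, sub_ne_zero]; exact hum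
      set δ := 1 - ‖m‖ with hδdef
      have hδ : 0 < δ := by rw [hδdef]; linarith
      set ε := min (1/2 : ℝ) (δ/(2*‖u - m‖)) with hεdef
      have hε0 : 0 < ε := by positivity
      have hε1 : ε < 1 := lt_of_le_of_lt (min_le_left _ _) (by norm_num)
      set u' := (1-ε) • m + ε • u with hu'def
      have hu'C : u' ∈ C := hC hmC huC (by linarith) hε0.le (by ring)
      have hu'B : ‖u'‖ < 1 := by
        have he : u' = m + ε • (u - m) := by rw [hu'def]; module
        have h1 : ‖u'‖ ≤ ‖m‖ + ε * ‖u - m‖ := by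
          rw [he]
          calc ‖m + ε • (u - m)‖ ≤ ‖m‖ + ‖ε • (u - m)‖ := norm_add_le _ _
            _ = ‖m‖ + ε * ‖u - m‖ := by rw [norm_smul, Real.norm_eq_abs, abs_of_pos hε0]
        have h2 : ε * ‖u - m‖ ≤ δ/2 := by
          calc ε * ‖u - m‖ ≤ (δ/(2*‖u - m‖)) * ‖u - m‖ :=
            mul_le_mul_of_nonneg_right (min_le_right _ _) humn.le
            _ = δ/2 := by field_simp
        rw [hδdef] at h2
        linarith
      have hden : (0:ℝ) < b + ε*a := by positivity
      have key : (ε*a) • y + b • u' = (b+ε*a) • m := by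
        have h2 : (ε*a) • y + (ε*b) • u = ε • m := by
          rw [← smul_smul, ← smul_smul, ← smul_add, hm]
        rw [hu'def,
          show (ε*a) • y + b • ((1-ε) • m + ε • u)
            = ((ε*a) • y + (ε*b) • u) + (b - ε*b) • m by module,
          h2, ← add_smul]
        congr 1
        linear_combination (-ε)*hab
      have hseg : m ∈ openSegment ℝ y u' := by
        refine ⟨(ε*a)/(b+ε*a), b/(b+ε*a), by positivity, by positivity,
          by rw [← add_div, div_eq_one_iff_eq hden.ne']; ring, ?_⟩
        have h4 : ((ε*a)/(b+ε*a)) • y + (b/(b+ε*a)) • u' = (b+ε*a)⁻¹ • ((ε*a) • y + b • u') := by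
          rw [hu'def]; module
        rw [h4, key, smul_smul, inv_mul_cancel₀ hden.ne', one_smul]
      exact (hFext.2 ⟨hyB, hyC⟩ ⟨mem_closedBall_zero_iff.mpr hu'B.le, hu'C⟩ hmF hseg)
  -- dimensions agree
  have hFG : F ⊆ G := by
    intro y hy
    obtain ⟨z, hzF, hseg⟩ := aux_ext_lemma hmI hy
    exact ⟨(hFK hy).2, z, (hFK hzF).2, hseg⟩
  have e1 : sdim (G ∩ ball (0 : EuclideanSpace ℝ (Fin n)) 1) = sdim G := by
    unfold sdim
    rw [aux_span_inter_open hGconv isOpen_ball hmG (mem_ball_zero_iff.mpr hmB)]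
  have le1 : sdim G ≤ sdim F := by
    rw [← e1]
    exact aux_sdim_mono (fun x hx => hGBF ⟨hx.1, ball_subset_closedBall hx.2⟩)
  have le2 : sdim F ≤ sdim G := aux_sdim_mono hFG
  exact ⟨G, ⟨hGconv, hGext⟩, ⟨m, hmG⟩, le_antisymm le1 le2⟩
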